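/- For λ ∈ ℂ and m ≥ 2, the m×m Jordan block J_m(λ) is convex-cyclic on ℂᵐ if and only if |λ| > 1 and λ is not real. Moreover, when this holds, a vector v = (v₁, ..., v_m) is a convex-cyclic vector for J_m(λ) if and only if v₁ ≠ 0. -/

import Mathlib

/-- A convex-polynomial: a convex combination of the monomials `1, z, z², …`. -/
def IsConvexPoly (p : Polynomial ℂ) : Prop :=
  ∃ (n : ℕ) (a : ℕ → ℝ), (∀ k, 0 ≤ a k) ∧ (∑ k ∈ Finset.range (n + 1), a k) = 1 ∧
    p = ∑ k ∈ Finset.range (n + 1), Polynomial.C ((a k : ℂ)) * Polynomial.X ^ k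

/-- The `n × n` lower Jordan block with eigenvalue `λ`. -/
def JordanBlock (n : ℕ) (lam : ℂ) : Matrix (Fin n) (Fin n) ℂ :=
  fun i j => if i = j then lam else if (i : ℕ) = (j : ℕ) + 1 then 1 else 0

/-- `v` is a convex-cyclic vector for the matrix `T` on `ℂ^N`. -/
def IsConvexCyclicVector {N : ℕ} (T : Matrix (Fin N) (Fin N) ℂ) (v : Fin N → ℂ) : Prop :=
  Dense {w : Fin N → ℂ | ∃ p, IsConvexPoly p ∧ (Polynomial.aeval T p).mulVec v = w}

namespace JBAux

open Polynomial Matrix Complex Finset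

/-! ### The shift matrix and powers of the Jordan block -/

lemma shift_apply (m : ℕ) (i j : Fin m) :
    JordanBlock m 0 i j = if (i : ℕ) = (j : ℕ) + 1 then 1 else 0 := by
  rcases eq_or_ne i j with h | h
  · subst h; simp [JordanBlock]
  · simp [JordanBlock, h]

lemma jordanBlock_eq (m : ℕ) (lam : ℂ) :
    JordanBlock m lam = lam • (1 : Matrix (Fin m) (Fin m) ℂ) + JordanBlock m 0 := by
  ext i j
  rcases eq_or_ne i j with h | h
  · subst h; simp [JordanBlock, Matrix.add_apply, Matrix.smul_apply, Matrix.one_apply]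
  · simp [JordanBlock, h, Matrix.add_apply, Matrix.smul_apply, Matrix.one_apply]

lemma shift_pow_apply (m q : ℕ) (i j : Fin m) :
    ((JordanBlock m 0) ^ q) i j = if (i : ℕ) = (j : ℕ) + q then 1 else 0 := by
  induction q generalizing j with
  | zero => simp [Matrix.one_apply, Fin.ext_iff]
  | succ q ih =>
    rw [pow_succ, Matrix.mul_apply]
    by_cases h : (j : ℕ) + 1 < m
    · rw [Finset.sum_eq_single (⟨(j : ℕ) + 1, h⟩ : Fin m)]
      · rw [ih, shift_apply]
        simp only [if_true, mul_one]
        rw [Nat.add_assoc, Nat.add_comm 1 q]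
      · intro b _ hb
        rw [shift_apply, if_neg, mul_zero]
        intro hb'
        exact hb (Fin.ext hb')
      · simp
    · rw [Finset.sum_eq_zero, if_neg (by omega)]
      intro b _
      rw [shift_apply, if_neg (by omega), mul_zero]

lemma shift_pow_mulVec (m q : ℕ) (v : Fin m → ℂ) (i : Fin m) :
    ((JordanBlock m 0) ^ q).mulVec v i
      = if h : q ≤ (i : ℕ) then v ⟨(i : ℕ) - q, by omega⟩ else 0 := by
  rw [Matrix.mulVec, dotProduct]
  by_cases h : q ≤ (i : ℕ)
  · rw [dif_pos h, Finset.sum_eq_single (⟨(i : ℕ) - q, by omega⟩ : Fin m)]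
    · have hc : (i : ℕ) = ((⟨(i : ℕ) - q, by omega⟩ : Fin m) : ℕ) + q := by
        simp only [Fin.val_mk]; omega
      rw [shift_pow_apply, if_pos hc, one_mul]
    · intro b _ hb
      rw [shift_pow_apply, if_neg, zero_mul]
      intro hb'
      apply hb
      apply Fin.ext
      simp only [Fin.val_mk]
      omega
    · simp
  · rw [dif_neg h, Finset.sum_eq_zero]
    intro b _
    rw [shift_pow_apply, if_neg (by omega), zero_mul]

lemma shift_pow_mulVec_zero (m q : ℕ) (v : Fin m → ℂ) (hq : m ≤ q) :
    ((JordanBlock m 0) ^ q).mulVec v = 0 := by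
  funext i
  rw [shift_pow_mulVec, dif_neg (by omega)]
  rfl

lemma sum_mulVec {m : ℕ} {ι : Type*} (s : Finset ι) (F : ι → Matrix (Fin m) (Fin m) ℂ)
    (v : Fin m → ℂ) :
    (∑ i ∈ s, F i).mulVec v = ∑ i ∈ s, (F i).mulVec v := by
  funext x
  simp only [Matrix.mulVec, dotProduct, Finset.sum_apply, Matrix.sum_apply,
    Finset.sum_mul]
  exact Finset.sum_comm

/-! ### The key identity -/

lemma aeval_mulVec (m : ℕ) (lam : ℂ) (p : ℂ[X]) (v : Fin m → ℂ) :
    (Polynomial.aeval (JordanBlock m lam) p).mulVec v =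
      ∑ j : Fin m, ((Polynomial.taylor lam p).coeff (j : ℕ))
        • ((JordanBlock m 0) ^ (j : ℕ)).mulVec v := by
  set q : ℂ[X] := Polynomial.taylor lam p with hq
  have h1 : Polynomial.aeval (JordanBlock m lam) p
      = Polynomial.aeval (JordanBlock m 0) q := by
    rw [hq, Polynomial.taylor_apply, Polynomial.aeval_comp]
    congr 1
    rw [map_add, Polynomial.aeval_X, Polynomial.aeval_C, Algebra.algebraMap_eq_smul_one,
      jordanBlock_eq m lam, add_comm]
  rw [h1, Polynomial.aeval_eq_sum_range (p := q) (JordanBlock m 0), sum_mulVec]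
  simp only [Matrix.smul_mulVec]
  set R := max (q.natDegree + 1) m with hR
  have e1 : ∑ i ∈ Finset.range (q.natDegree + 1), q.coeff i • ((JordanBlock m 0) ^ i).mulVec v
      = ∑ i ∈ Finset.range R, q.coeff i • ((JordanBlock m 0) ^ i).mulVec v := by
    apply Finset.sum_subset (Finset.range_subset_range.2 (le_max_left _ _))
    intro i _ hi
    rw [Polynomial.coeff_eq_zero_of_natDegree_lt (by simp at hi; omega), zero_smul]
  have e2 : ∑ j : Fin m, q.coeff (j : ℕ) • ((JordanBlock m 0) ^ (j : ℕ)).mulVec v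
      = ∑ i ∈ Finset.range R, q.coeff i • ((JordanBlock m 0) ^ i).mulVec v := by
    rw [Fin.sum_univ_eq_sum_range (fun i => q.coeff i • ((JordanBlock m 0) ^ i).mulVec v)]
    apply Finset.sum_subset (Finset.range_subset_range.2 (le_max_right _ _))
    intro i _ hi
    rw [shift_pow_mulVec_zero m i v (by simp at hi; omega), smul_zero]
  rw [e1, e2]

lemma sum_smul_shift_apply (m : ℕ) (v c : Fin m → ℂ) (i : Fin m) :
    (∑ j : Fin m, c j • ((JordanBlock m 0) ^ (j : ℕ)).mulVec v) i
      = ∑ j : Fin m, c j * (if h : (j : ℕ) ≤ (i : ℕ) then v ⟨(i : ℕ) - j, by omega⟩ else 0) := by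
  rw [Finset.sum_apply]
  apply Finset.sum_congr rfl
  intro j _
  rw [Pi.smul_apply, smul_eq_mul, shift_pow_mulVec]

lemma coord_zero (m : ℕ) (hm : 0 < m) (lam : ℂ) (p : ℂ[X]) (v : Fin m → ℂ) :
    (Polynomial.aeval (JordanBlock m lam) p).mulVec v ⟨0, hm⟩ = p.eval lam * v ⟨0, hm⟩ := by
  rw [aeval_mulVec, sum_smul_shift_apply, Finset.sum_eq_single (⟨0, hm⟩ : Fin m)]
  · rw [dif_pos (by simp)]
    rw [Polynomial.taylor_coeff_zero]
    congr 1
  · intro b _ hb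
    rw [dif_neg, mul_zero]
    intro hb'
    exact hb (Fin.ext (Nat.le_zero.mp hb'))
  · simp

/-! ### The coefficient vectors and convex hull -/

noncomputable def Wfin (m : ℕ) (lam : ℂ) (k : ℕ) : Fin m → ℂ :=
  fun j => lam ^ (k - (j : ℕ)) * (k.choose (j : ℕ) : ℂ)

noncomputable def cvec (m : ℕ) (lam : ℂ) (p : ℂ[X]) : Fin m → ℂ :=
  fun j => (Polynomial.taylor lam p).coeff (j : ℕ)

lemma cvec_convex_sum (m : ℕ) (lam : ℂ) (n : ℕ) (a : ℕ → ℝ) :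
    cvec m lam (∑ k ∈ Finset.range (n + 1), Polynomial.C ((a k : ℂ)) * Polynomial.X ^ k)
      = ∑ k ∈ Finset.range (n + 1), a k • Wfin m lam k := by
  funext j
  simp only [cvec, map_sum, Polynomial.finset_sum_coeff, Finset.sum_apply, Pi.smul_apply]
  apply Finset.sum_congr rfl
  intro k _
  have h : Polynomial.taylor lam (Polynomial.C ((a k : ℂ)) * Polynomial.X ^ k)
      = Polynomial.C ((a k : ℂ)) * (Polynomial.X + Polynomial.C lam) ^ k := by
    rw [Polynomial.taylor_apply, Polynomial.mul_comp, Polynomial.C_comp, Polynomial.pow_comp,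
      Polynomial.X_comp]
  rw [h, Polynomial.coeff_C_mul, Polynomial.coeff_X_add_C_pow, Complex.real_smul, Wfin]

lemma cvec_set_eq (m : ℕ) (lam : ℂ) :
    {c : Fin m → ℂ | ∃ p, IsConvexPoly p ∧ cvec m lam p = c}
      = convexHull ℝ (Set.range (Wfin m lam)) := by
  ext x
  constructor
  · rintro ⟨p, ⟨n, a, ha0, ha1, rfl⟩, rfl⟩
    rw [cvec_convex_sum]
    exact (convex_convexHull ℝ _).sum_mem (fun k _ => ha0 k) ha1
      (fun k _ => subset_convexHull ℝ _ (Set.mem_range_self k))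
  · intro hx
    rw [_root_.convexHull_eq] at hx
    obtain ⟨ι, t, w, z, hw0, hw1, hz, hx⟩ := hx
    classical
    have hk : ∀ i ∈ t, ∃ n, Wfin m lam n = z i := fun i hi => hz i hi
    set k : ι → ℕ := fun i => if h : ∃ n, Wfin m lam n = z i then h.choose else 0 with hkdef
    have hkz : ∀ i ∈ t, Wfin m lam (k i) = z i := by
      intro i hi
      rw [hkdef]
      simp only
      rw [dif_pos (hk i hi)]
      exact (hk i hi).choose_spec
    set n := t.sup k with hn
    set a : ℕ → ℝ := fun q => ∑ i ∈ t.filter (fun i => k i = q), w i with hadef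
    have ha0 : ∀ q, 0 ≤ a q := fun q =>
      Finset.sum_nonneg (fun i hi => hw0 i (Finset.mem_filter.1 hi).1)
    have hmaps : ∀ i ∈ t, k i ∈ Finset.range (n + 1) := fun i hi =>
      Finset.mem_range.2 (Nat.lt_succ_of_le (Finset.le_sup hi))
    have ha1 : ∑ q ∈ Finset.range (n + 1), a q = 1 := by
      rw [hadef, Finset.sum_fiberwise_of_maps_to hmaps]
      exact hw1
    refine ⟨_, ⟨n, a, ha0, ha1, rfl⟩, ?_⟩
    rw [cvec_convex_sum]
    calc ∑ q ∈ Finset.range (n + 1), a q • Wfin m lam q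
        = ∑ q ∈ Finset.range (n + 1), ∑ i ∈ t.filter (fun i => k i = q), w i • z i := by
          apply Finset.sum_congr rfl
          intro q _
          rw [hadef]
          simp only
          rw [Finset.sum_smul]
          apply Finset.sum_congr rfl
          intro i hi
          obtain ⟨hit, hkq⟩ := Finset.mem_filter.1 hi
          rw [← hkz i hit, hkq]
      _ = ∑ i ∈ t, w i • z i := Finset.sum_fiberwise_of_maps_to hmaps _
      _ = x := by rw [← hx, Finset.centerMass_eq_of_sum_1 _ _ hw1]

/-! ### The triangular Toeplitz map -/

noncomputable def Phi (m : ℕ) (v : Fin m → ℂ) : (Fin m → ℂ) →ₗ[ℂ] (Fin m → ℂ) where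
  toFun c := ∑ j : Fin m, c j • ((JordanBlock m 0) ^ (j : ℕ)).mulVec v
  map_add' c c' := by
    simp only [Pi.add_apply, add_smul, Finset.sum_add_distrib]
  map_smul' s c := by
    simp only [Pi.smul_apply, smul_eq_mul, RingHom.id_apply, Finset.smul_sum, smul_smul]

lemma Phi_injective (m : ℕ) (hm : 0 < m) (v : Fin m → ℂ) (hv : v ⟨0, hm⟩ ≠ 0) :
    Function.Injective (Phi m v) := by
  intro c c' hcc
  have hd : Phi m v (c - c') = 0 := by rw [map_sub, hcc, sub_self]
  have key : ∀ n : ℕ, ∀ i : Fin m, (i : ℕ) = n → (c - c') i = 0 := by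
    intro n
    induction n using Nat.strong_induction_on with
    | _ n ih =>
      intro i hi
      have h0 := congrFun hd i
      rw [show Phi m v (c - c')
          = ∑ j : Fin m, (c - c') j • ((JordanBlock m 0) ^ (j : ℕ)).mulVec v from rfl] at h0
      rw [sum_smul_shift_apply m v (c - c') i, Finset.sum_eq_single i] at h0
      · rw [dif_pos le_rfl] at h0
        simp only [Nat.sub_self] at h0
        rcases mul_eq_zero.1 h0 with h | h
        · exact h
        · exact absurd h hv
      · intro b _ hb
        by_cases hb2 : (b : ℕ) ≤ (i : ℕ)
        · have hbne : (b : ℕ) ≠ (i : ℕ) := fun h => hb (Fin.ext h)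
          rw [ih (b : ℕ) (by omega) b rfl, zero_mul]
        · rw [dif_neg hb2, mul_zero]
      · intro h
        exact absurd (Finset.mem_univ i) h
  have hsub : c - c' = 0 := funext (fun i => key (i : ℕ) i rfl)
  exact sub_eq_zero.1 hsub

lemma set_eq_image (m : ℕ) (lam : ℂ) (v : Fin m → ℂ) :
    {w : Fin m → ℂ | ∃ p, IsConvexPoly p ∧ (Polynomial.aeval (JordanBlock m lam) p).mulVec v = w}
      = (Phi m v) '' (convexHull ℝ (Set.range (Wfin m lam))) := by
  rw [← cvec_set_eq]
  ext w
  constructor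
  · rintro ⟨p, hp, rfl⟩
    exact ⟨cvec m lam p, ⟨p, hp, rfl⟩, (aeval_mulVec m lam p v).symm⟩
  · rintro ⟨c, ⟨p, hp, rfl⟩, rfl⟩
    exact ⟨p, hp, aeval_mulVec m lam p v⟩

/-! ### Positive directions on the circle -/

lemma circle_functional_pos (u : ℂ) (hu : ‖u‖ = 1) (him : 0 < u.im)
    (g : ℂ →L[ℝ] ℝ) (hg : g ≠ 0) :
    ∃ c > 0, ∀ N : ℕ, ∃ n ≥ N, c ≤ g (u ^ n) := by
  have hπ := Real.pi_pos
  set θ := Complex.arg u with hθdef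
  have hθ0 : 0 < θ := by
    rcases lt_trichotomy θ 0 with h | h | h
    · exact absurd (Complex.arg_neg_iff.1 h) (by linarith)
    · exact absurd (Complex.arg_eq_zero_iff.1 h).2 (by intro hh; linarith)
    · exact h
  have hθπ : θ < Real.pi := Complex.arg_lt_pi_iff.2 (Or.inr (ne_of_gt him))
  -- represent g via a complex number
  have hgz : ∀ z : ℂ, g z = (g 1) * z.re + (g Complex.I) * z.im := by
    intro z
    have hz : z = z.re • (1 : ℂ) + z.im • Complex.I := by
      apply Complex.ext <;> simp
    calc g z = g (z.re • (1 : ℂ) + z.im • Complex.I) := by rw [← hz]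
      _ = z.re • g 1 + z.im • g Complex.I := by rw [map_add, g.map_smul, g.map_smul]
      _ = (g 1) * z.re + (g Complex.I) * z.im := by
            simp only [smul_eq_mul]; ring
  set w : ℂ := Complex.mk (g 1) (g Complex.I) with hwdef
  have hw0 : w ≠ 0 := by
    intro h
    apply hg
    ext1 z
    have h1 : g 1 = 0 := by rw [← Complex.zero_re, ← h]
    have h2 : g Complex.I = 0 := by rw [← Complex.zero_im, ← h]
    simp [hgz z, h1, h2]
  set wbar : ℂ := (starRingEnd ℂ) w with hwbardef
  have hwc : ∀ z : ℂ, g z = (wbar * z).re := by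
    intro z
    rw [Complex.mul_re, hgz z]
    simp [hwbardef, hwdef]
  set ψ := Complex.arg wbar with hψdef
  have key : ∀ n : ℕ, g (u ^ n) = ‖w‖ * Real.cos (ψ + n * θ) := by
    intro n
    have hu' : u = Complex.exp (θ * Complex.I) := by
      conv_lhs => rw [← Complex.norm_mul_exp_arg_mul_I u]
      rw [hu, Complex.ofReal_one, one_mul]
    have hwb : wbar = (‖w‖ : ℂ) * Complex.exp ((ψ : ℂ) * Complex.I) := by
      conv_lhs => rw [← Complex.norm_mul_exp_arg_mul_I wbar]
      rw [hwbardef, Complex.norm_conj]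
    rw [hwc]
    have : wbar * u ^ n = (‖w‖ : ℂ) * Complex.exp ((↑(ψ + n * θ)) * Complex.I) := by
      rw [hwb]
      conv_lhs => rw [hu']
      rw [← Complex.exp_nat_mul, mul_assoc, ← Complex.exp_add]
      congr 2
      push_cast
      ring
    rw [this, Complex.re_ofReal_mul, Complex.exp_ofReal_mul_I_re]
  refine ⟨‖w‖ * Real.cos (θ / 2), ?_, ?_⟩
  · apply mul_pos (by simpa using hw0)
    exact Real.cos_pos_of_mem_Ioo ⟨by linarith, by linarith⟩
  · intro N
    obtain ⟨K, hK⟩ := exists_nat_ge (((N + 1 : ℝ) * θ + ψ + θ / 2) / (2 * Real.pi))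
    have h2π : (0 : ℝ) < 2 * Real.pi := by linarith
    have hL' : (N + 1 : ℝ) * θ + ψ + θ / 2 ≤ 2 * Real.pi * K := by
      rw [div_le_iff₀ h2π] at hK
      linarith
    set L : ℝ := 2 * Real.pi * K - ψ - θ / 2 with hLdef
    have hLN : (N + 1 : ℝ) * θ ≤ L := by rw [hLdef]; linarith
    have hL0 : 0 ≤ L := le_trans (by positivity) hLN
    set n : ℕ := Nat.floor (L / θ) + 1 with hndef
    have hn1 : L < n * θ := by
      have := Nat.lt_floor_add_one (L / θ)
      calc L = (L / θ) * θ := by field_simp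
        _ < (Nat.floor (L / θ) + 1 : ℝ) * θ := by
            apply mul_lt_mul_of_pos_right this hθ0
        _ = n * θ := by rw [hndef]; push_cast; ring
    have hn2 : (n : ℝ) * θ ≤ L + θ := by
      have hfl : (Nat.floor (L / θ) : ℝ) * θ ≤ L := by
        have h := Nat.floor_le (show 0 ≤ L / θ by positivity)
        calc (Nat.floor (L / θ) : ℝ) * θ ≤ (L / θ) * θ :=
              mul_le_mul_of_nonneg_right h hθ0.le
          _ = L := by field_simp
      rw [hndef]; push_cast; nlinarith
    have hnN : N ≤ n := by
      have h1 : ((N : ℝ) + 1) * θ < n * θ := lt_of_le_of_lt hLN hn1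
      have h2 : ((N : ℝ) + 1) < (n : ℝ) := lt_of_mul_lt_mul_right h1 hθ0.le
      by_contra hc
      push_neg at hc
      have : (n : ℝ) < N := by exact_mod_cast hc
      linarith
    refine ⟨n, hnN, ?_⟩
    rw [key n]
    have hang : ψ + (n : ℝ) * θ = (ψ + n * θ - 2 * Real.pi * K) + K * (2 * Real.pi) := by ring
    rw [hang, Real.cos_add_nat_mul_two_pi]
    set r : ℝ := ψ + (n : ℝ) * θ - 2 * Real.pi * K with hrdef
    have hr1 : -(θ / 2) < r := by rw [hrdef, hLdef] at *; linarith
    have hr2 : r ≤ θ / 2 := by rw [hrdef, hLdef] at *; linarith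
    have hcos : Real.cos (θ / 2) ≤ Real.cos |r| :=
      Real.cos_le_cos_of_nonneg_of_le_pi (abs_nonneg r) (by linarith)
        (abs_le.2 ⟨by linarith, hr2⟩)
    rw [Real.cos_abs] at hcos
    exact mul_le_mul_of_nonneg_left hcos (norm_nonneg w)

lemma circle_functional (u : ℂ) (hu : ‖u‖ = 1) (him : u.im ≠ 0)
    (g : ℂ →L[ℝ] ℝ) (hg : g ≠ 0) :
    ∃ c > 0, ∀ N : ℕ, ∃ n ≥ N, c ≤ g (u ^ n) := by
  rcases him.lt_or_gt with hlt | hlt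
  · set g' : ℂ →L[ℝ] ℝ := g.comp (Complex.conjCLE : ℂ ≃L[ℝ] ℂ).toContinuousLinearMap with hg'def
    have hg'app : ∀ z, g' z = g ((starRingEnd ℂ) z) := by
      intro z; simp [hg'def, Complex.conjCLE_apply]
    have hg'0 : g' ≠ 0 := by
      intro h
      apply hg
      ext1 z
      have := hg'app ((starRingEnd ℂ) z)
      rw [h, Complex.conj_conj] at this
      simpa using this.symm
    obtain ⟨c, hc, hmain⟩ := circle_functional_pos ((starRingEnd ℂ) u)
      (by rwa [Complex.norm_conj]) (by simpa using hlt) g' hg'0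
    refine ⟨c, hc, fun N => ?_⟩
    obtain ⟨n, hn, hval⟩ := hmain N
    refine ⟨n, hn, ?_⟩
    rwa [← map_pow, hg'app, Complex.conj_conj] at hval
  · exact circle_functional_pos u hu hlt g hg

/-! ### The main density theorem -/

set_option maxHeartbeats 1000000 in
lemma main_dense (m : ℕ) (lam : ℂ) (h1 : 1 < ‖lam‖) (him : lam.im ≠ 0) :
    closure (convexHull ℝ (Set.range (Wfin m lam))) = Set.univ := by
  classical
  by_contra hne
  have hex : ∃ x₀, x₀ ∉ closure (convexHull ℝ (Set.range (Wfin m lam))) := by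
    by_contra h
    push_neg at h
    exact hne (Set.eq_univ_of_forall h)
  obtain ⟨x₀, hx₀⟩ := hex
  obtain ⟨f, s, hfs, hsx⟩ := geometric_hahn_banach_closed_point
    ((convex_convexHull ℝ _).closure) isClosed_closure hx₀
  have hfsW : ∀ k : ℕ, f (Wfin m lam k) < s := fun k =>
    hfs _ (subset_closure (subset_convexHull ℝ _ (Set.mem_range_self k)))
  -- coordinate functionals
  set g : Fin m → (ℂ →L[ℝ] ℝ) := fun j =>
    f.comp ((LinearMap.single ℝ (fun _ : Fin m => ℂ) j).toContinuousLinearMap) with hgdef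
  have hgapp : ∀ (j : Fin m) (z : ℂ), g j z = f (Pi.single j z) := by
    intro j z
    simp [hgdef, LinearMap.single_apply]
  have hfdecomp : ∀ x : Fin m → ℂ, f x = ∑ j : Fin m, g j (x j) := by
    intro x
    have hx : x = ∑ j : Fin m, Pi.single j (x j) := by
      funext i
      rw [Finset.sum_apply]
      exact (Fintype.sum_pi_single i (fun j => x j)).symm
    conv_lhs => rw [hx]
    rw [map_sum]
    exact Finset.sum_congr rfl (fun j _ => (hgapp j (x j)).symm)
  -- the unit direction
  set r : ℝ := ‖lam‖ with hrdef
  have hr1 : (1 : ℝ) < r := h1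
  have hr0 : (0 : ℝ) < r := by linarith
  set u : ℂ := lam / (r : ℂ) with hudef
  have hlam : lam = (r : ℂ) * u := by
    have hrne : (r : ℂ) ≠ 0 := Complex.ofReal_ne_zero.mpr hr0.ne'
    rw [hudef, mul_comm, div_mul_cancel₀ lam hrne]
  have hu1 : ‖u‖ = 1 := by
    rw [hudef, norm_div, Complex.norm_real, Real.norm_eq_abs, abs_of_pos hr0, ← hrdef, div_self hr0.ne']
  have huim : u.im ≠ 0 := by
    intro h
    apply him
    rw [hlam]
    simp [Complex.mul_im, h]
  -- the coefficient as a real scalar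
  have hWsmul : ∀ (k : ℕ) (j : Fin m),
      Wfin m lam k j = ((k.choose (j : ℕ) * r ^ (k - (j : ℕ)) : ℝ)) • u ^ (k - (j : ℕ)) := by
    intro k j
    rw [Wfin, Complex.real_smul, hlam, mul_pow]
    push_cast
    ring
  have hgW : ∀ (k : ℕ) (j : Fin m),
      g j (Wfin m lam k j) = (k.choose (j : ℕ) * r ^ (k - (j : ℕ))) * g j (u ^ (k - (j : ℕ))) := by
    intro k j
    rw [hWsmul k j, (g j).map_smul, smul_eq_mul]
  -- bound on the functionals on powers of u
  have hub : ∀ (j : Fin m) (p : ℕ), |g j (u ^ p)| ≤ ‖g j‖ := by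
    intro j p
    have := (g j).le_opNorm (u ^ p)
    rwa [Real.norm_eq_abs, norm_pow, hu1, one_pow, mul_one] at this
  by_cases hall : ∀ j : Fin m, g j = 0
  · -- all functionals vanish: contradiction since f separates
    have hW0 : f (Wfin m lam 0) = 0 := by
      rw [hfdecomp]
      simp [hall]
    have hx0 : f x₀ = 0 := by
      rw [hfdecomp]
      simp [hall]
    have := hfsW 0
    rw [hW0] at this
    rw [hx0] at hsx
    linarith
  · push_neg at hall
    obtain ⟨j₀, hj₀⟩ := hall
    set T : Finset (Fin m) := Finset.univ.filter (fun j => g j ≠ 0) with hTdef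
    have hTne : T.Nonempty := ⟨j₀, by simp [hTdef, hj₀]⟩
    set J : Fin m := T.max' hTne with hJdef
    have hTmem : ∀ j : Fin m, j ∈ T → g j ≠ 0 := by
      intro j hj
      rw [hTdef, Finset.mem_filter] at hj
      exact hj.2
    have hJne : g J ≠ 0 := hTmem _ (T.max'_mem hTne)
    have hJtop : ∀ j : Fin m, J < j → g j = 0 := by
      intro j hj
      by_contra h
      exact absurd (Finset.le_max' T j (by simp [hTdef, h])) (not_le.2 hj)
    obtain ⟨c, hc, hcirc⟩ := circle_functional u hu1 huim (g J) hJne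
    set M : ℝ := ∑ j : Fin m, ‖g j‖ with hMdef
    have hM0 : 0 ≤ M := Finset.sum_nonneg (fun j _ => norm_nonneg _)
    have hMj : ∀ j : Fin m, ‖g j‖ ≤ M :=
      fun j => Finset.single_le_sum (f := fun j => ‖g j‖)
        (fun i _ => norm_nonneg _) (Finset.mem_univ j)
    set Jn : ℕ := (J : ℕ) with hJndef
    by_cases hJ0 : Jn = 0
    · -- top index is zero: single exponential term
      obtain ⟨K, hK⟩ := pow_unbounded_of_one_lt (max s 0 / c) hr1
      obtain ⟨n, hnK, hval⟩ := hcirc K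
      have hsum : f (Wfin m lam n) = g J (Wfin m lam n J) := by
        rw [hfdecomp]
        apply Finset.sum_eq_single J
        · intro b _ hb
          have hJb : J < b := by
            rcases lt_or_ge J b with h | h
            · exact h
            · exfalso
              apply hb
              apply Fin.ext
              have : (b : ℕ) ≤ Jn := h
              omega
          rw [hJtop b hJb]
          rfl
        · intro h
          exact absurd (Finset.mem_univ J) h
      have hJv : (J : ℕ) = 0 := by rw [← hJndef]; exact hJ0
      have hterm : g J (Wfin m lam n J) = r ^ n * g J (u ^ n) := by
        rw [hgW, hJv]
        simp
      have hge : r ^ K * c ≤ f (Wfin m lam n) := by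
        rw [hsum, hterm]
        have h1' : r ^ K ≤ r ^ n := pow_le_pow_right₀ hr1.le hnK
        have h2' : r ^ K * c ≤ r ^ n * c := by
          apply mul_le_mul_of_nonneg_right h1' hc.le
        have h3' : r ^ n * c ≤ r ^ n * g J (u ^ n) := by
          apply mul_le_mul_of_nonneg_left hval (by positivity)
        linarith
      have hgt : max s 0 < r ^ K * c := by
        rw [div_lt_iff₀ hc] at hK
        linarith
      have := hfsW n
      have hms : s ≤ max s 0 := le_max_left _ _
      linarith
    · -- top index is positive
      have hJn1 : 1 ≤ Jn := Nat.one_le_iff_ne_zero.2 hJ0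
      set β : ℝ := c / ((Nat.factorial Jn : ℝ) * r ^ Jn * 2 ^ Jn) with hβdef
      have hβ0 : 0 < β := by
        apply div_pos hc
        positivity
      obtain ⟨k₀, hk₀⟩ := exists_nat_gt ((max s 0 + 1 + (m : ℝ) * M) / β)
      set N : ℕ := max k₀ (2 * Jn + 1) with hNdef
      obtain ⟨n, hnN, hval⟩ := hcirc N
      set k : ℕ := n + Jn with hkdef
      have hkk₀ : k₀ ≤ k := by
        have h1' : k₀ ≤ N := le_max_left _ _
        omega
      have hk2J : 2 * Jn ≤ k := by
        have h1' : 2 * Jn + 1 ≤ N := le_max_right _ _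
        omega
      have hk1 : 1 ≤ k := by omega
      -- main term lower bound
      have hJv : (J : ℕ) = Jn := hJndef.symm
      have hmain : c * ((k.choose Jn : ℝ) * r ^ (k - Jn)) ≤ g J (Wfin m lam k J) := by
        rw [hgW, hJv]
        have hkJ : k - Jn = n := by omega
        rw [hkJ]
        have hre : c * ((k.choose Jn : ℝ) * r ^ n)
            = ((k.choose Jn : ℝ) * r ^ n) * c := by ring
        rw [hre]
        apply mul_le_mul_of_nonneg_left hval (by positivity)
      -- rest bound
      have hrest : |∑ j ∈ Finset.univ.erase J, g j (Wfin m lam k j)|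
          ≤ (m : ℝ) * (M * (k : ℝ) ^ (Jn - 1) * r ^ k) := by
        calc |∑ j ∈ Finset.univ.erase J, g j (Wfin m lam k j)|
            ≤ ∑ j ∈ Finset.univ.erase J, |g j (Wfin m lam k j)| :=
              Finset.abs_sum_le_sum_abs _ _
          _ ≤ ∑ _j ∈ Finset.univ.erase J, (M * (k : ℝ) ^ (Jn - 1) * r ^ k) := by
              apply Finset.sum_le_sum
              intro j hj
              rcases lt_or_ge J j with hJj | hjJ
              · rw [hJtop j hJj]
                simp only [ContinuousLinearMap.zero_apply, abs_zero]
                positivity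
              · have hjJ' : (j : ℕ) < Jn := by
                  have hne2 := Finset.ne_of_mem_erase hj
                  have : (j : ℕ) ≠ Jn := fun hh => hne2 (Fin.ext hh)
                  have : (j : ℕ) ≤ Jn := hjJ
                  omega
                rw [hgW, abs_mul]
                have hnn : |(k.choose (j : ℕ) * r ^ (k - (j : ℕ)) : ℝ)|
                    = (k.choose (j : ℕ) : ℝ) * r ^ (k - (j : ℕ)) := by
                  apply _root_.abs_of_nonneg
                  positivity
                rw [hnn]
                have b1 : (k.choose (j : ℕ) : ℝ) ≤ (k : ℝ) ^ (Jn - 1) := by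
                  calc (k.choose (j : ℕ) : ℝ) ≤ ((k : ℝ)) ^ (j : ℕ) := by
                        exact_mod_cast Nat.choose_le_pow k (j : ℕ)
                    _ ≤ (k : ℝ) ^ (Jn - 1) :=
                        pow_le_pow_right₀ (by exact_mod_cast hk1) (by omega)
                have b2 : r ^ (k - (j : ℕ)) ≤ r ^ k :=
                  pow_le_pow_right₀ hr1.le (Nat.sub_le k (j : ℕ))
                have b3 : |g j (u ^ (k - (j : ℕ)))| ≤ M := le_trans (hub j _) (hMj j)
                calc (k.choose (j : ℕ) : ℝ) * r ^ (k - (j : ℕ)) * |g j (u ^ (k - (j : ℕ)))|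
                    ≤ (k : ℝ) ^ (Jn - 1) * r ^ k * M := by
                      apply mul_le_mul
                      · apply mul_le_mul b1 b2 (by positivity) (by positivity)
                      · exact b3
                      · exact abs_nonneg _
                      · positivity
                  _ = M * (k : ℝ) ^ (Jn - 1) * r ^ k := by ring
          _ ≤ (m : ℝ) * (M * (k : ℝ) ^ (Jn - 1) * r ^ k) := by
              rw [Finset.sum_const, nsmul_eq_mul]
              apply mul_le_mul_of_nonneg_right _ (by positivity)
              have hcard : (Finset.univ.erase J).card ≤ (Finset.univ : Finset (Fin m)).card :=
                Finset.card_le_card (Finset.erase_subset _ _)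
              rw [Finset.card_univ, Fintype.card_fin] at hcard
              exact_mod_cast hcard
      -- lower bound on choose
      have hchoose : ((k : ℝ) / 2) ^ Jn / (Nat.factorial Jn : ℝ) ≤ (k.choose Jn : ℝ) := by
        have hnat : (k + 1 - Jn) ^ Jn ≤ Nat.factorial Jn * k.choose Jn := by
          rw [← Nat.descFactorial_eq_factorial_mul_choose]
          exact Nat.pow_sub_le_descFactorial k Jn
        have hcast : ((k + 1 - Jn : ℕ) : ℝ) ^ Jn
            ≤ (Nat.factorial Jn : ℝ) * (k.choose Jn : ℝ) := by
          exact_mod_cast hnat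
        have hhalf : (k : ℝ) / 2 ≤ ((k + 1 - Jn : ℕ) : ℝ) := by
          have hle : Jn ≤ k + 1 := by omega
          rw [Nat.cast_sub hle]
          push_cast
          have : (2 : ℝ) * Jn ≤ k := by exact_mod_cast hk2J
          linarith
        have hp : ((k : ℝ) / 2) ^ Jn ≤ ((k + 1 - Jn : ℕ) : ℝ) ^ Jn :=
          pow_le_pow_left₀ (by positivity) hhalf Jn
        rw [div_le_iff₀ (by positivity : (0:ℝ) < (Nat.factorial Jn : ℝ))]
        calc ((k : ℝ) / 2) ^ Jn ≤ ((k + 1 - Jn : ℕ) : ℝ) ^ Jn := hp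
          _ ≤ (Nat.factorial Jn : ℝ) * (k.choose Jn : ℝ) := hcast
          _ = (k.choose Jn : ℝ) * (Nat.factorial Jn : ℝ) := by ring
      -- assemble
      have hβk : β * k * ((k : ℝ) ^ (Jn - 1) * r ^ k)
          ≤ c * ((k.choose Jn : ℝ) * r ^ (k - Jn)) := by
        have hrk : r ^ (k - Jn) = r ^ k / r ^ Jn := by
          rw [eq_div_iff (by positivity : (r : ℝ) ^ Jn ≠ 0), ← pow_add]
          congr 1
          omega
        have hkJn : (k : ℝ) ^ Jn = (k : ℝ) ^ (Jn - 1) * k := by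
          rw [← pow_succ]
          congr 1
          omega
        have h2 : ((k : ℝ) / 2) ^ Jn = (k : ℝ) ^ Jn / 2 ^ Jn := div_pow _ _ _
        have hm1 := mul_le_mul_of_nonneg_left hchoose (le_of_lt hc)
        rw [h2, hkJn] at hm1
        have hpos : (0:ℝ) ≤ r ^ k / r ^ Jn := by positivity
        have hm2 := mul_le_mul_of_nonneg_right hm1 hpos
        rw [hrk]
        have hf1 : (Nat.factorial Jn : ℝ) ≠ 0 := by positivity
        have hf2 : (r : ℝ) ^ Jn ≠ 0 := by positivity
        have hf3 : (2 : ℝ) ^ Jn ≠ 0 := by positivity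
        calc β * k * ((k : ℝ) ^ (Jn - 1) * r ^ k)
            = c * ((k : ℝ) ^ (Jn - 1) * (k : ℝ) / 2 ^ Jn / (Nat.factorial Jn : ℝ))
                * (r ^ k / r ^ Jn) := by
              rw [hβdef]
              field_simp
          _ ≤ c * (k.choose Jn : ℝ) * (r ^ k / r ^ Jn) := hm2
          _ = c * ((k.choose Jn : ℝ) * (r ^ k / r ^ Jn)) := by ring
      have hone : (1 : ℝ) ≤ (k : ℝ) ^ (Jn - 1) * r ^ k := by
        have e1 : (1 : ℝ) ≤ (k : ℝ) ^ (Jn - 1) := one_le_pow₀ (by exact_mod_cast hk1)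
        have e2 : (1 : ℝ) ≤ r ^ k := one_le_pow₀ hr1.le
        nlinarith
      have hβbig : max s 0 + 1 + (m : ℝ) * M ≤ β * k := by
        rw [div_lt_iff₀ hβ0] at hk₀
        have : (k₀ : ℝ) ≤ (k : ℝ) := by exact_mod_cast hkk₀
        nlinarith
      -- final contradiction
      have hsplit : f (Wfin m lam k)
          = g J (Wfin m lam k J) + ∑ j ∈ Finset.univ.erase J, g j (Wfin m lam k j) := by
        rw [hfdecomp]
        exact (Finset.add_sum_erase _ _ (Finset.mem_univ J)).symm
      have hlow : (β * k - (m : ℝ) * M) * ((k : ℝ) ^ (Jn - 1) * r ^ k) ≤ f (Wfin m lam k) := by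
        rw [hsplit]
        have hr2 : -((m : ℝ) * (M * (k : ℝ) ^ (Jn - 1) * r ^ k))
            ≤ ∑ j ∈ Finset.univ.erase J, g j (Wfin m lam k j) := by
          have := (abs_le.1 hrest).1
          linarith
        have expand : (β * k - (m : ℝ) * M) * ((k : ℝ) ^ (Jn - 1) * r ^ k)
            = β * k * ((k : ℝ) ^ (Jn - 1) * r ^ k)
              - (m : ℝ) * (M * (k : ℝ) ^ (Jn - 1) * r ^ k) := by ring
        rw [expand]
        linarith [hβk, hmain]
      have hgap : max s 0 + 1 ≤ (β * k - (m : ℝ) * M) * ((k : ℝ) ^ (Jn - 1) * r ^ k) := by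
        have h3 : max s 0 + 1 ≤ β * k - (m : ℝ) * M := by linarith
        calc max s 0 + 1 ≤ β * k - (m : ℝ) * M := h3
          _ = (β * k - (m : ℝ) * M) * 1 := by ring
          _ ≤ (β * k - (m : ℝ) * M) * ((k : ℝ) ^ (Jn - 1) * r ^ k) := by
              apply mul_le_mul_of_nonneg_left hone
              have h5 : (0:ℝ) ≤ max s 0 := le_max_right s 0
              linarith
      have := hfsW k
      have hms : s ≤ max s 0 := le_max_left _ _
      linarith

/-! ### Transfer of density through the Toeplitz map -/

set_option maxHeartbeats 1000000 in
lemma cyclic_of (m : ℕ) (hm : 0 < m) (lam : ℂ) (h1 : 1 < ‖lam‖) (him : lam.im ≠ 0)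
    (v : Fin m → ℂ) (hv : v ⟨0, hm⟩ ≠ 0) :
    IsConvexCyclicVector (JordanBlock m lam) v := by
  unfold IsConvexCyclicVector
  rw [set_eq_image m lam v, dense_iff_closure_eq]
  have hinj := Phi_injective m hm v hv
  have hsurj : Function.Surjective (Phi m v) := LinearMap.injective_iff_surjective.1 hinj
  let e : (Fin m → ℂ) ≃ₗ[ℂ] (Fin m → ℂ) := LinearEquiv.ofBijective (Phi m v) ⟨hinj, hsurj⟩
  let h : (Fin m → ℂ) ≃ₜ (Fin m → ℂ) := e.toContinuousLinearEquiv.toHomeomorph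
  have hco : ⇑(Phi m v) = ⇑h := rfl
  rw [hco, ← Homeomorph.image_closure, main_dense m lam h1 him, Set.image_univ]
  exact h.surjective.range_eq

/-! ### Necessity -/

set_option maxHeartbeats 1000000 in
lemma not_cyclic_of_bound (m : ℕ) (hm : 0 < m) (lam : ℂ) (v : Fin m → ℂ)
    (x₀ : ℂ) (ρ : ℝ) (hρ : 0 < ρ)
    (hb : ∀ p : Polynomial ℂ, IsConvexPoly p → ρ ≤ dist (p.eval lam * v ⟨0, hm⟩) x₀) :
    ¬ IsConvexCyclicVector (JordanBlock m lam) v := by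
  intro hd
  obtain ⟨y, hy1, hy2⟩ := Metric.dense_iff.1 hd (fun _ => x₀) ρ hρ
  obtain ⟨p, hp, rfl⟩ := hy2
  have h1 : dist ((Polynomial.aeval (JordanBlock m lam) p).mulVec v ⟨0, hm⟩) x₀ < ρ :=
    lt_of_le_of_lt
      (dist_le_pi_dist ((Polynomial.aeval (JordanBlock m lam) p).mulVec v) (fun _ => x₀) ⟨0, hm⟩)
      (Metric.mem_ball.1 hy1)
  rw [coord_zero m hm lam p v] at h1
  exact absurd h1 (not_lt.2 (hb p hp))

lemma eval_mem_convex_bound (lam : ℂ) (hlam : ‖lam‖ ≤ 1) (p : Polynomial ℂ)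
    (hp : IsConvexPoly p) : ‖p.eval lam‖ ≤ 1 := by
  obtain ⟨n, a, ha0, ha1, rfl⟩ := hp
  rw [Polynomial.eval_finset_sum]
  calc ‖∑ k ∈ Finset.range (n + 1),
        Polynomial.eval lam (Polynomial.C ((a k : ℂ)) * Polynomial.X ^ k)‖
      ≤ ∑ k ∈ Finset.range (n + 1),
        ‖Polynomial.eval lam (Polynomial.C ((a k : ℂ)) * Polynomial.X ^ k)‖ :=
        norm_sum_le _ _
    _ ≤ ∑ k ∈ Finset.range (n + 1), a k := by
        apply Finset.sum_le_sum
        intro k _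
        rw [Polynomial.eval_mul, Polynomial.eval_C, Polynomial.eval_pow, Polynomial.eval_X,
          norm_mul, Complex.norm_real, Real.norm_eq_abs, _root_.abs_of_nonneg (ha0 k), norm_pow]
        have hple : ‖lam‖ ^ k ≤ 1 := pow_le_one₀ (norm_nonneg lam) hlam
        nlinarith [ha0 k, pow_nonneg (norm_nonneg lam) k]
    _ = 1 := ha1

lemma eval_real (lam : ℂ) (hlam : lam.im = 0) (p : Polynomial ℂ) (hp : IsConvexPoly p) :
    (p.eval lam).im = 0 := by
  obtain ⟨n, a, ha0, ha1, rfl⟩ := hp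
  have hl : lam = ((lam.re : ℝ) : ℂ) := by
    apply Complex.ext <;> simp [hlam]
  rw [Polynomial.eval_finset_sum, Complex.im_sum]
  apply Finset.sum_eq_zero
  intro k _
  rw [Polynomial.eval_mul, Polynomial.eval_C, Polynomial.eval_pow, Polynomial.eval_X, hl,
    ← Complex.ofReal_pow, ← Complex.ofReal_mul, Complex.ofReal_im]

end JBAux

/-- Convex-cyclic Jordan blocks (the complex case). -/
theorem jordanBlock_convexCyclic_iff (m : ℕ) (hm : 2 ≤ m) (lam : ℂ) :
    ((∃ v, IsConvexCyclicVector (JordanBlock m lam) v) ↔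
      (1 < ‖lam‖ ∧ lam.im ≠ 0)) ∧
    ((1 < ‖lam‖ ∧ lam.im ≠ 0) →
      ∀ v : Fin m → ℂ,
        IsConvexCyclicVector (JordanBlock m lam) v ↔ v ⟨0, by omega⟩ ≠ 0) := by
  have h0 : 0 < m := by omega
  have hzero : ∀ v : Fin m → ℂ, v ⟨0, h0⟩ = 0 →
      ¬ IsConvexCyclicVector (JordanBlock m lam) v := by
    intro v hv0
    refine JBAux.not_cyclic_of_bound m h0 lam v 1 1 one_pos ?_
    intro p hp
    rw [hv0, mul_zero, Complex.dist_eq, zero_sub]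
    simp
  have habs : ∀ v : Fin m → ℂ, IsConvexCyclicVector (JordanBlock m lam) v →
      1 < ‖lam‖ := by
    intro v hv
    by_contra hle
    push_neg at hle
    refine JBAux.not_cyclic_of_bound m h0 lam v ((‖v ⟨0, h0⟩‖ + 1 : ℝ) : ℂ) 1
      one_pos ?_ hv
    intro p hp
    rw [Complex.dist_eq]
    have h1 : ‖p.eval lam * v ⟨0, h0⟩‖ ≤ ‖v ⟨0, h0⟩‖ := by
      rw [norm_mul]
      have := JBAux.eval_mem_convex_bound lam hle p hp
      nlinarith [norm_nonneg (v ⟨0, h0⟩), norm_nonneg (p.eval lam)]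
    have h2 : ‖((‖v ⟨0, h0⟩‖ + 1 : ℝ) : ℂ)‖
        = ‖v ⟨0, h0⟩‖ + 1 := by
      rw [Complex.norm_real, Real.norm_eq_abs]
      apply abs_of_nonneg
      positivity
    have h3 := abs_norm_sub_norm_le (p.eval lam * v ⟨0, h0⟩)
      (((‖v ⟨0, h0⟩‖ + 1 : ℝ) : ℂ))
    rw [h2] at h3
    have h4 := (abs_le.1 h3).1
    linarith
  have hreal : ∀ v : Fin m → ℂ, IsConvexCyclicVector (JordanBlock m lam) v →
      lam.im ≠ 0 := by
    intro v hv him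
    by_cases hv0 : v ⟨0, h0⟩ = 0
    · exact hzero v hv0 hv
    · refine JBAux.not_cyclic_of_bound m h0 lam v (Complex.I * v ⟨0, h0⟩)
        (‖v ⟨0, h0⟩‖) (norm_pos_iff.mpr hv0) ?_ hv
      intro p hp
      have hev : p.eval lam = (((p.eval lam).re : ℝ) : ℂ) := by
        apply Complex.ext
        · simp
        · simp [JBAux.eval_real lam him p hp]
      rw [Complex.dist_eq]
      rw [hev]
      rw [show (((p.eval lam).re : ℝ) : ℂ) * v ⟨0, h0⟩ - Complex.I * v ⟨0, h0⟩
          = ((((p.eval lam).re : ℝ) : ℂ) - Complex.I) * v ⟨0, h0⟩ by ring, norm_mul]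
      have h4 : 1 ≤ ‖(((p.eval lam).re : ℝ) : ℂ) - Complex.I‖ := by
        have h5 := Complex.abs_im_le_norm ((((p.eval lam).re : ℝ) : ℂ) - Complex.I)
        simp at h5
        linarith
      nlinarith [norm_nonneg (v ⟨0, h0⟩)]
  refine ⟨⟨?_, ?_⟩, ?_⟩
  · rintro ⟨v, hv⟩
    exact ⟨habs v hv, hreal v hv⟩
  · rintro ⟨h1, h2⟩
    exact ⟨fun _ => 1, JBAux.cyclic_of m h0 lam h1 h2 _ one_ne_zero⟩
  · rintro ⟨h1, h2⟩ v
    constructor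
    · intro hv hv0
      exact hzero v hv0 hv
    · intro hv0
      exact JBAux.cyclic_of m h0 lam h1 h2 v hv0
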